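/- The backstepping transformation maps the plant into the target system: Let θ > 0, λ ∈ ℝ, c ≥ 0, and let K ∈ C²({(x,y) : 0 ≤ y ≤ x ≤ 1}) satisfy θ·(K_xx − K_yy) = (λ+c)·K on {0 ≤ y ≤ x ≤ 1}, K(x,x) = −((λ+c)/(2θ))·x and K(x,0) = 0 for all x ∈ [0,1]. Let a < b and suppose u : (a,b) × [0,1] → ℝ is continuously differentiable with u(t,·) ∈ C²([0,1]) for each t ∈ (a,b), satisfies u_t = θ·u_xx + λ·u on (a,b) × (0,1), and u(t,0) = 0 for all t ∈ (a,b). Define w(t,x) = u(t,x) − ∫₀ˣ K(x,y)·u(t,y) dy. Then for all t ∈ (a,b): w_t(t,x) = θ·w_xx(t,x) − c·w(t,x) for all x ∈ (0,1), w(t,0) = 0, and w(t,1) = u(t,1) − ∫₀¹ K(1,y)·u(t,y) dy. -/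

import Mathlib

open Set Filter MeasureTheory intervalIntegral Metric
open scoped Interval

def Tri : Set (ℝ × ℝ) := {p : ℝ × ℝ | 0 ≤ p.2 ∧ p.2 ≤ p.1 ∧ p.1 ≤ 1}

lemma convex_Tri : Convex ℝ Tri := by
  intro p hp q hq s r hs hr hsr
  obtain ⟨h1, h2, h3⟩ := hp
  obtain ⟨h4, h5, h6⟩ := hq
  refine ⟨?_, ?_, ?_⟩ <;>
    simp only [Prod.snd_add, Prod.fst_add, Prod.smul_snd, Prod.smul_fst, smul_eq_mul]
  · positivity
  · nlinarith [mul_le_mul_of_nonneg_left h2 hs, mul_le_mul_of_nonneg_left h5 hr]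
  · nlinarith [mul_le_mul_of_nonneg_left h3 hs, mul_le_mul_of_nonneg_left h6 hr]

lemma interior_Tri_mem {p : ℝ × ℝ} (h1 : 0 < p.2) (h2 : p.2 < p.1) (h3 : p.1 < 1) :
    Tri ∈ nhds p := by
  have hU : IsOpen {q : ℝ × ℝ | 0 < q.2 ∧ q.2 < q.1 ∧ q.1 < 1} := by
    refine IsOpen.inter (isOpen_lt continuous_const continuous_snd) ?_
    exact IsOpen.inter (isOpen_lt continuous_snd continuous_fst)
      (isOpen_lt continuous_fst continuous_const)
  refine Filter.mem_of_superset (hU.mem_nhds ⟨h1, h2, h3⟩) ?_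
  rintro q ⟨a1, a2, a3⟩; exact ⟨a1.le, a2.le, a3.le⟩

lemma uniqueDiffOn_Tri : UniqueDiffOn ℝ Tri :=
  uniqueDiffOn_convex convex_Tri ⟨(3/4, 1/4), by
    exact mem_interior_iff_mem_nhds.2 (interior_Tri_mem (by norm_num) (by norm_num) (by norm_num))⟩

lemma isCompact_Tri : IsCompact Tri := by
  have : Tri ⊆ Icc ((0:ℝ), (0:ℝ)) ((1:ℝ), (1:ℝ)) := by
    rintro p ⟨h1, h2, h3⟩
    constructor
    · constructor <;> simp <;> linarith
    · constructor <;> simp <;> linarith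
  have hcl : IsClosed Tri := by
    refine IsClosed.inter (isClosed_le continuous_const continuous_snd) ?_
    exact IsClosed.inter (isClosed_le continuous_snd continuous_fst)
      (isClosed_le continuous_fst continuous_const)
  exact (isCompact_Icc).of_isClosed_subset hcl this

lemma mem_Tri {x y : ℝ} (h1 : 0 ≤ y) (h2 : y ≤ x) (h3 : x ≤ 1) : ((x, y) : ℝ × ℝ) ∈ Tri :=
  ⟨h1, h2, h3⟩

/-- chain rule along a path staying in a set -/
lemma hasDerivAt_comp_path {F : ℝ × ℝ → ℝ} {T : Set (ℝ × ℝ)} {γ : ℝ → ℝ × ℝ} {z : ℝ}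
    {d : ℝ × ℝ} (hF : DifferentiableWithinAt ℝ F T (γ z)) (hγ : HasDerivAt γ d z)
    (hmem : ∀ᶠ w in nhds z, γ w ∈ T) :
    HasDerivAt (fun w => F (γ w)) (fderivWithin ℝ F T (γ z) d) z := by
  have h1 : HasFDerivWithinAt F (fderivWithin ℝ F T (γ z)) T (γ z) := hF.hasFDerivWithinAt
  have h2 : HasDerivWithinAt (F ∘ γ) (fderivWithin ℝ F T (γ z) d) (γ ⁻¹' T) z :=
    h1.comp_hasDerivWithinAt z (hγ.hasDerivWithinAt) (fun w hw => hw)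
  exact (h2.hasDerivAt hmem)

lemma sub_lemma (G : ℝ × ℝ → ℝ) (hG : ContDiffOn ℝ 1 G Tri)
    (v dv : ℝ → ℝ) (hv : ContinuousOn v (Icc 0 1))
    (hv' : ∀ y ∈ Ioo (0:ℝ) 1, HasDerivAt v (dv y) y)
    (hdv : ContinuousOn dv (Icc 0 1)) {x : ℝ} (hx : x ∈ Ioo (0:ℝ) 1) :
    HasDerivAt (fun z => ∫ y in (0:ℝ)..z, G (z, y) * v y)
      (G (x, x) * v x + ∫ y in (0:ℝ)..x, (fderivWithin ℝ G Tri (x, y)) (1, 0) * v y) x := by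
  obtain ⟨hx0, hx1⟩ := hx
  have hxne : x ≠ 0 := ne_of_gt hx0
  -- basic facts
  have hmemT : ∀ z ∈ Ioo (0:ℝ) 1, ∀ s ∈ Icc (0:ℝ) 1, ((z, z*s) : ℝ × ℝ) ∈ Tri := by
    rintro z ⟨hz0, hz1⟩ s ⟨hs0, hs1⟩
    refine ⟨mul_nonneg hz0.le hs0, ?_, hz1.le⟩
    show z * s ≤ z
    nlinarith
  have hmemI : ∀ z ∈ Ioo (0:ℝ) 1, ∀ s ∈ Icc (0:ℝ) 1, z*s ∈ Icc (0:ℝ) 1 := by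
    rintro z ⟨hz0, hz1⟩ s ⟨hs0, hs1⟩
    constructor
    · exact mul_nonneg hz0.le hs0
    · nlinarith
  have hmemT2 : ∀ y ∈ Icc (0:ℝ) x, ((x, y) : ℝ × ℝ) ∈ Tri := by
    rintro y ⟨h1, h2⟩; exact ⟨h1, h2, hx1.le⟩
  have GC : ContinuousOn G Tri := hG.continuousOn
  have hGd : DifferentiableOn ℝ G Tri := hG.differentiableOn (by norm_num)
  have DGC : ContinuousOn (fun p => fderivWithin ℝ G Tri p) Tri :=
    hG.continuousOn_fderivWithin uniqueDiffOn_Tri le_rfl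
  -- bounds
  obtain ⟨MG, hMG⟩ := isCompact_Tri.exists_bound_of_continuousOn GC
  obtain ⟨MD, hMD⟩ := isCompact_Tri.exists_bound_of_continuousOn DGC
  obtain ⟨Mv, hMv⟩ := (isCompact_Icc (a := (0:ℝ)) (b := 1)).exists_bound_of_continuousOn hv
  obtain ⟨Mdv, hMdv⟩ := (isCompact_Icc (a := (0:ℝ)) (b := 1)).exists_bound_of_continuousOn hdv
  have hMv0 : 0 ≤ Mv := le_trans (norm_nonneg _) (hMv 0 (by norm_num))
  have hMdv0 : 0 ≤ Mdv := le_trans (norm_nonneg _) (hMdv 0 (by norm_num))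
  have hMG0 : 0 ≤ MG := le_trans (norm_nonneg _) (hMG (1,0) ⟨le_refl 0, by norm_num, le_refl 1⟩)
  have hMD0 : 0 ≤ MD := le_trans (norm_nonneg _) (hMD (1,0) ⟨le_refl 0, by norm_num, le_refl 1⟩)
  -- change of variables
  set H : ℝ → ℝ := fun z => ∫ s in (0:ℝ)..1, G (z, z*s) * v (z*s) with hH
  have hA : ∀ z ∈ Ioo (0:ℝ) 1, (∫ y in (0:ℝ)..z, G (z, y) * v y) = z * H z := by
    intro z hz
    have hzne : z ≠ 0 := ne_of_gt hz.1
    have := intervalIntegral.integral_comp_mul_left (a := (0:ℝ)) (b := 1)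
      (f := fun y => G (z, y) * v y) (c := z) hzne
    simp only [mul_zero, mul_one] at this
    rw [hH]; simp only []
    rw [this, smul_eq_mul, ← mul_assoc, mul_inv_cancel₀ hzne, one_mul]
  -- derivative of H via dominated convergence
  obtain ⟨ε, hε, hball⟩ := Metric.isOpen_iff.1 isOpen_Ioo x ⟨hx0, hx1⟩
  set F' : ℝ → ℝ → ℝ := fun z s =>
    (fderivWithin ℝ G Tri (z, z*s)) (1, s) * v (z*s) + G (z, z*s) * (dv (z*s) * s) with hF'
  have hpathC : ∀ z ∈ Ioo (0:ℝ) 1, ContinuousOn (fun s : ℝ => ((z, z*s) : ℝ × ℝ)) (Icc 0 1) :=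
    fun z hz => (continuous_const.prodMk (continuous_const.mul continuous_id)).continuousOn
  have hFcont : ∀ z ∈ Ioo (0:ℝ) 1, ContinuousOn (fun s => G (z, z*s) * v (z*s)) (Icc 0 1) := by
    intro z hz
    exact ((GC.comp (hpathC z hz) (fun s hs => hmemT z hz s hs)).mul
      (hv.comp ((continuous_const.mul continuous_id).continuousOn) (fun s hs => hmemI z hz s hs)))
  have hF'cont : ContinuousOn (F' x) (Icc 0 1) := by
    have h1 : ContinuousOn (fun s => fderivWithin ℝ G Tri (x, x*s)) (Icc 0 1) :=
      DGC.comp (hpathC x ⟨hx0, hx1⟩) (fun s hs => hmemT x ⟨hx0, hx1⟩ s hs)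
    have h2 : ContinuousOn (fun s : ℝ => ((1:ℝ), s)) (Icc 0 1) :=
      (continuous_const.prodMk continuous_id).continuousOn
    have h3 : ContinuousOn (fun s => (fderivWithin ℝ G Tri (x, x*s)) (1, s)) (Icc 0 1) :=
      h1.clm_apply h2
    have h4 : ContinuousOn (fun s => v (x*s)) (Icc 0 1) :=
      hv.comp ((continuous_const.mul continuous_id).continuousOn)
        (fun s hs => hmemI x ⟨hx0, hx1⟩ s hs)
    have h5 : ContinuousOn (fun s => dv (x*s)) (Icc 0 1) :=
      hdv.comp ((continuous_const.mul continuous_id).continuousOn)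
        (fun s hs => hmemI x ⟨hx0, hx1⟩ s hs)
    exact (h3.mul h4).add ((GC.comp (hpathC x ⟨hx0, hx1⟩)
      (fun s hs => hmemT x ⟨hx0, hx1⟩ s hs)).mul (h5.mul continuous_id.continuousOn))
  have hsub : Ι (0:ℝ) 1 ⊆ Icc (0:ℝ) 1 := by
    rw [uIoc_of_le (by norm_num : (0:ℝ) ≤ 1)]; exact Ioc_subset_Icc_self
  have meas1 : ∀ᶠ z in nhds x,
      AEStronglyMeasurable (fun s => G (z, z*s) * v (z*s)) (volume.restrict (Ι (0:ℝ) 1)) := by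
    filter_upwards [isOpen_Ioo.mem_nhds (⟨hx0, hx1⟩ : x ∈ Ioo (0:ℝ) 1)] with z hz
    exact ((hFcont z hz).mono hsub).aestronglyMeasurable measurableSet_uIoc
  have huIcc : uIcc (0:ℝ) 1 = Icc 0 1 := uIcc_of_le (by norm_num)
  have int1 : IntervalIntegrable (fun s => G (x, x*s) * v (x*s)) volume 0 1 :=
    ContinuousOn.intervalIntegrable (by rw [huIcc]; exact hFcont x ⟨hx0, hx1⟩)
  have meas2 : AEStronglyMeasurable (F' x) (volume.restrict (Ι (0:ℝ) 1)) :=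
    (hF'cont.mono hsub).aestronglyMeasurable measurableSet_uIoc
  have bound1 : ∀ᵐ s ∂(volume : Measure ℝ), s ∈ Ι (0:ℝ) 1 → ∀ z ∈ ball x ε,
      ‖F' z s‖ ≤ MD * Mv + MG * Mdv := by
    refine Filter.Eventually.of_forall (fun s hs z hz => ?_)
    rw [uIoc_of_le (by norm_num : (0:ℝ) ≤ 1)] at hs
    have hzI : z ∈ Ioo (0:ℝ) 1 := hball hz
    have hsI : s ∈ Icc (0:ℝ) 1 := ⟨hs.1.le, hs.2⟩
    have hpT := hmemT z hzI s hsI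
    have hzsI := hmemI z hzI s hsI
    have e1 : ‖(fderivWithin ℝ G Tri (z, z*s)) (1, s)‖ ≤ MD := by
      refine le_trans (ContinuousLinearMap.le_opNorm _ _) ?_
      have : ‖((1:ℝ), s)‖ ≤ 1 := by
        rw [Prod.norm_def]
        simp only [norm_one, Real.norm_eq_abs]
        rw [abs_of_nonneg hs.1.le]
        exact max_le le_rfl hs.2
      calc ‖fderivWithin ℝ G Tri (z, z*s)‖ * ‖((1:ℝ), s)‖
          ≤ MD * 1 := mul_le_mul (hMD _ hpT) this (norm_nonneg _) hMD0
        _ = MD := mul_one _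
    calc ‖F' z s‖ ≤ ‖(fderivWithin ℝ G Tri (z, z*s)) (1, s) * v (z*s)‖ +
          ‖G (z, z*s) * (dv (z*s) * s)‖ := norm_add_le _ _
      _ ≤ MD * Mv + MG * Mdv := by
          rw [norm_mul, norm_mul, norm_mul]
          have hs1 : ‖s‖ ≤ 1 := by rw [Real.norm_eq_abs, abs_of_nonneg hs.1.le]; exact hs.2
          gcongr
          · exact hMv _ hzsI
          · exact hMG _ hpT
          · calc ‖dv (z*s)‖ * ‖s‖ ≤ Mdv * 1 :=
                mul_le_mul (hMdv _ hzsI) hs1 (norm_nonneg _) hMdv0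
              _ = Mdv := mul_one _
  have diff1 : ∀ᵐ s ∂(volume : Measure ℝ), s ∈ Ι (0:ℝ) 1 → ∀ z ∈ ball x ε,
      HasDerivAt (fun z => G (z, z*s) * v (z*s)) (F' z s) z := by
    refine Filter.Eventually.of_forall (fun s hs z hz => ?_)
    rw [uIoc_of_le (by norm_num : (0:ℝ) ≤ 1)] at hs
    have hzI : z ∈ Ioo (0:ℝ) 1 := hball hz
    have hsI : s ∈ Icc (0:ℝ) 1 := ⟨hs.1.le, hs.2⟩
    have hmc : HasDerivAt (fun z : ℝ => z * s) s z := by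
      simpa using (hasDerivAt_id z).mul_const s
    have hγ : HasDerivAt (fun z : ℝ => ((z, z*s) : ℝ × ℝ)) (1, s) z :=
      (hasDerivAt_id z).prodMk hmc
    have h1 : HasDerivAt (fun z => G (z, z*s)) ((fderivWithin ℝ G Tri (z, z*s)) (1, s)) z := by
      refine hasDerivAt_comp_path (hGd _ (hmemT z hzI s hsI)) hγ ?_
      filter_upwards [isOpen_Ioo.mem_nhds hzI] with w hw
      exact hmemT w hw s hsI
    have hzs : z*s ∈ Ioo (0:ℝ) 1 := by
      constructor
      · exact mul_pos hzI.1 hs.1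
      · nlinarith [hzI.1, hzI.2, hs.1, hs.2]
    have hmc2 : HasDerivAt (fun z : ℝ => z * s) s z := by
      simpa using (hasDerivAt_id z).mul_const s
    have h2 : HasDerivAt (fun z => v (z*s)) (dv (z*s) * s) z :=
      (hv' _ hzs).comp z hmc2
    exact h1.mul h2
  obtain ⟨hF'int, hHd⟩ := intervalIntegral.hasDerivAt_integral_of_dominated_loc_of_deriv_le
    (F := fun z s => G (z, z*s) * v (z*s)) (F' := F') (x₀ := x) (a := (0:ℝ)) (b := 1)
    (μ := volume) (bound := fun _ => MD * Mv + MG * Mdv) (Metric.ball_mem_nhds _ hε)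
    meas1 int1 meas2 bound1 intervalIntegrable_const diff1
  -- derivative of z * H z
  have hzH : HasDerivAt (fun z => z * H z) (1 * H x + x * ∫ s in (0:ℝ)..1, F' x s) x :=
    (hasDerivAt_id x).mul hHd
  -- transfer
  have hfinal : HasDerivAt (fun z => ∫ y in (0:ℝ)..z, G (z, y) * v y)
      (1 * H x + x * ∫ s in (0:ℝ)..1, F' x s) x := by
    refine hzH.congr_of_eventuallyEq ?_
    filter_upwards [isOpen_Ioo.mem_nhds (⟨hx0, hx1⟩ : x ∈ Ioo (0:ℝ) 1)] with z hz
    exact hA z hz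
  -- now identify the value
  -- continuity of slices
  have hmapsTo : MapsTo (fun y : ℝ => ((x, y) : ℝ × ℝ)) (Icc 0 x) Tri := fun y hy => hmemT2 y hy
  have cGx : ContinuousOn (fun y => G (x, y)) (Icc 0 x) :=
    GC.comp ((continuous_const.prodMk continuous_id).continuousOn) hmapsTo
  have cG2x : ContinuousOn (fun y => (fderivWithin ℝ G Tri (x, y)) ((0:ℝ), (1:ℝ))) (Icc 0 x) :=
    (DGC.comp ((continuous_const.prodMk continuous_id).continuousOn) hmapsTo).clm_apply
      continuousOn_const
  have cvx : ContinuousOn v (Icc 0 x) := hv.mono (Icc_subset_Icc le_rfl hx1.le)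
  have cdvx : ContinuousOn dv (Icc 0 x) := hdv.mono (Icc_subset_Icc le_rfl hx1.le)
  have huIccx : uIcc (0:ℝ) x = Icc 0 x := uIcc_of_le hx0.le
  -- continuity in s at z = x
  have pathx := hpathC x ⟨hx0, hx1⟩
  have mapsx : MapsTo (fun s : ℝ => ((x, x*s) : ℝ × ℝ)) (Icc 0 1) Tri :=
    fun s hs => hmemT x ⟨hx0, hx1⟩ s hs
  have mapsxI : MapsTo (fun s : ℝ => x*s) (Icc 0 1) (Icc 0 1) :=
    fun s hs => hmemI x ⟨hx0, hx1⟩ s hs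
  have c1 : ContinuousOn (fun s => (fderivWithin ℝ G Tri (x, x*s)) ((1:ℝ), (0:ℝ))) (Icc 0 1) :=
    (DGC.comp pathx mapsx).clm_apply continuousOn_const
  have c2 : ContinuousOn (fun s => (fderivWithin ℝ G Tri (x, x*s)) ((0:ℝ), (1:ℝ))) (Icc 0 1) :=
    (DGC.comp pathx mapsx).clm_apply continuousOn_const
  have c3 : ContinuousOn (fun s => v (x*s)) (Icc 0 1) :=
    hv.comp ((continuous_const.mul continuous_id).continuousOn) mapsxI
  have c4 : ContinuousOn (fun s => dv (x*s)) (Icc 0 1) :=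
    hdv.comp ((continuous_const.mul continuous_id).continuousOn) mapsxI
  have c5 : ContinuousOn (fun s => G (x, x*s)) (Icc 0 1) := GC.comp pathx mapsx
  set φ : ℝ → ℝ := fun y => (fderivWithin ℝ G Tri (x, y)) ((0:ℝ), (1:ℝ)) * v y
      + G (x, y) * dv y with hφ
  set I1 : ℝ := (∫ s in (0:ℝ)..1, (fderivWithin ℝ G Tri (x, x*s)) ((1:ℝ), (0:ℝ)) * v (x*s))
    with hI1
  set I2 : ℝ := (∫ s in (0:ℝ)..1, s * φ (x*s)) with hI2
  -- pointwise decomposition of F' x s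
  have hpt : ∀ s : ℝ, F' x s
      = (fderivWithin ℝ G Tri (x, x*s)) ((1:ℝ), (0:ℝ)) * v (x*s) + s * φ (x*s) := by
    intro s
    have hvec : ((1:ℝ), s) = ((1:ℝ), (0:ℝ)) + s • ((0:ℝ), (1:ℝ)) := by
      simp [Prod.ext_iff]
    rw [hF']
    simp only [hvec, ContinuousLinearMap.map_add, ContinuousLinearMap.map_smul, smul_eq_mul, hφ]
    ring
  have intA : IntervalIntegrable
      (fun s => (fderivWithin ℝ G Tri (x, x*s)) ((1:ℝ), (0:ℝ)) * v (x*s)) volume 0 1 :=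
    ContinuousOn.intervalIntegrable (by rw [huIcc]; exact c1.mul c3)
  have intB : IntervalIntegrable (fun s => s * φ (x*s)) volume 0 1 :=
    ContinuousOn.intervalIntegrable (by
      rw [huIcc]
      exact continuous_id.continuousOn.mul ((c2.mul c3).add (c5.mul c4)))
  have e1 : (∫ s in (0:ℝ)..1, F' x s) = I1 + I2 := by
    rw [hI1, hI2, ← intervalIntegral.integral_add intA intB]
    exact intervalIntegral.integral_congr (fun s _ => hpt s)
  -- substitution back for the G₁ term
  have e2 : x * I1 = (∫ y in (0:ℝ)..x, (fderivWithin ℝ G Tri (x, y)) ((1:ℝ), (0:ℝ)) * v y) := by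
    have h := intervalIntegral.integral_comp_mul_left (a := (0:ℝ)) (b := 1)
      (f := fun y => (fderivWithin ℝ G Tri (x, y)) ((1:ℝ), (0:ℝ)) * v y) (c := x) hxne
    simp only [mul_zero, mul_one] at h
    rw [hI1, h, smul_eq_mul, ← mul_assoc, mul_inv_cancel₀ hxne, one_mul]
  -- substitution back for the ψ term
  have e3 : (∫ y in (0:ℝ)..x, y * φ y) = x * (x * I2) := by
    have h := intervalIntegral.integral_comp_mul_left (a := (0:ℝ)) (b := 1)
      (f := fun y => y * φ y) (c := x) hxne
    simp only [mul_zero, mul_one] at h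
    have hptψ : ∀ s ∈ uIcc (0:ℝ) 1, (fun s => x * s * φ (x * s)) s
        = (fun s => x * (s * φ (x * s))) s := by
      intro s _; ring
    calc (∫ y in (0:ℝ)..x, y * φ y) = x * (x⁻¹ • ∫ y in (0:ℝ)..x, y * φ y) := by
          rw [smul_eq_mul, ← mul_assoc, mul_inv_cancel₀ hxne, one_mul]
      _ = x * ∫ s in (0:ℝ)..1, x * s * φ (x * s) := by rw [← h]
      _ = x * ∫ s in (0:ℝ)..1, x * (s * φ (x * s)) := by
          rw [intervalIntegral.integral_congr hptψ]
      _ = x * (x * I2) := by rw [intervalIntegral.integral_const_mul, hI2]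
  -- FTC for y ↦ y * (G (x,y) * v y)
  have hintGv : IntervalIntegrable (fun y => G (x, y) * v y) volume 0 x :=
    ContinuousOn.intervalIntegrable (by rw [huIccx]; exact cGx.mul cvx)
  have hintψ : IntervalIntegrable (fun y => y * φ y) volume 0 x :=
    ContinuousOn.intervalIntegrable (by
      rw [huIccx]
      exact continuous_id.continuousOn.mul ((cG2x.mul cvx).add (cGx.mul cdvx)))
  have ftc : (∫ y in (0:ℝ)..x, (G (x, y) * v y + y * φ y)) = x * (G (x, x) * v x) := by
    have hcontR : ContinuousOn (fun y => y * (G (x, y) * v y)) (Icc 0 x) :=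
      continuous_id.continuousOn.mul (cGx.mul cvx)
    have hderivR : ∀ y ∈ Ioo 0 x, HasDerivWithinAt (fun y' => y' * (G (x, y') * v y'))
        (G (x, y) * v y + y * φ y) (Ioi y) y := by
      intro y hy
      have hGy : HasDerivAt (fun y' => G (x, y'))
          ((fderivWithin ℝ G Tri (x, y)) ((0:ℝ), (1:ℝ))) y := by
        refine hasDerivAt_comp_path (hGd _ (hmemT2 y (Ioo_subset_Icc_self hy)))
          ((hasDerivAt_const y x).prodMk (hasDerivAt_id y)) ?_
        filter_upwards [isOpen_Ioo.mem_nhds hy] with w hw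
        exact hmemT2 w (Ioo_subset_Icc_self hw)
      have hvy : HasDerivAt v (dv y) y := hv' y ⟨hy.1, lt_trans hy.2 hx1⟩
      have hprod : HasDerivAt (fun y' => G (x, y') * v y') (φ y) y := hGy.mul hvy
      have hR : HasDerivAt (fun y' => y' * (G (x, y') * v y'))
          (1 * (G (x, y) * v y) + y * φ y) y := (hasDerivAt_id y).mul hprod
      have : (1 : ℝ) * (G (x, y) * v y) + y * φ y = G (x, y) * v y + y * φ y := by ring
      rw [this] at hR
      exact hR.hasDerivWithinAt
    have hintR : IntervalIntegrable (fun y => G (x, y) * v y + y * φ y) volume 0 x :=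
      hintGv.add hintψ
    have := intervalIntegral.integral_eq_sub_of_hasDeriv_right_of_le hx0.le hcontR hderivR hintR
    rw [this]; ring
  have e4 : (∫ y in (0:ℝ)..x, G (x, y) * v y) + (∫ y in (0:ℝ)..x, y * φ y)
      = x * (G (x, x) * v x) := by
    rw [← intervalIntegral.integral_add hintGv hintψ]; exact ftc
  have e5 : (∫ y in (0:ℝ)..x, G (x, y) * v y) = x * H x := hA x ⟨hx0, hx1⟩
  -- x * I2 = G(x,x)*v x - H x
  have e6 : x * I2 = G (x, x) * v x - H x := by
    have h7 : x * (x * I2) = x * (G (x, x) * v x - H x) := by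
      rw [← e3]
      have := e4
      rw [e5] at this
      linarith
    exact mul_left_cancel₀ hxne h7
  -- conclude
  convert hfinal using 1
  rw [e1, mul_add, ← e2, e6]
  ring



/-- the backstepping transformation maps the plant into the target
system: if the kernel `K` is `C²` on the triangle and satisfies the kernel PDE
`θ(K_xx − K_yy) = (λ+c)K` with `K(x,x) = −((λ+c)/(2θ))x` and `K(x,0) = 0`, then the
Volterra transform `w(t,x) = u(t,x) − ∫₀ˣ K(x,y)u(t,y) dy` of a classical solution of
`u_t = θu_xx + λu`, `u(t,0)=0`, solves `w_t = θw_xx − cw`, `w(t,0)=0`, with boundary value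
`w(t,1) = u(t,1) − ∫₀¹ K(1,y)u(t,y) dy`. -/
theorem statement_13 (θ lam c a b : ℝ) (hθ : 0 < θ) (hc : 0 ≤ c) (hab : a < b)
    (K : ℝ → ℝ → ℝ)
    (hKreg : ContDiffOn ℝ 2 (fun p : ℝ × ℝ => K p.1 p.2)
      {p : ℝ × ℝ | 0 ≤ p.2 ∧ p.2 ≤ p.1 ∧ p.1 ≤ 1})
    (hKpde : ∀ x y : ℝ, 0 ≤ y → y ≤ x → x ≤ 1 →
      θ * (deriv (deriv (fun x' => K x' y)) x - deriv (deriv (fun y' => K x y')) y)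
        = (lam + c) * K x y)
    (hKdiag : ∀ x ∈ Set.Icc (0:ℝ) 1, K x x = -((lam + c)/(2*θ)) * x)
    (hK0 : ∀ x ∈ Set.Icc (0:ℝ) 1, K x 0 = 0)
    (u : ℝ → ℝ → ℝ)
    (hreg : ContDiffOn ℝ 1 (fun p : ℝ × ℝ => u p.1 p.2) (Set.Ioo a b ×ˢ Set.Icc (0:ℝ) 1))
    (hC2 : ∀ t ∈ Set.Ioo a b, ContDiffOn ℝ 2 (u t) (Set.Icc (0:ℝ) 1))
    (hpde : ∀ t ∈ Set.Ioo a b, ∀ x ∈ Set.Ioo (0:ℝ) 1,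
      deriv (fun s => u s x) t = θ * deriv (deriv (u t)) x + lam * u t x)
    (hbc : ∀ t ∈ Set.Ioo a b, u t 0 = 0) :
    ∀ t ∈ Set.Ioo a b,
      (∀ x ∈ Set.Ioo (0:ℝ) 1,
        deriv (fun s => u s x - ∫ y in (0:ℝ)..x, K x y * u s y) t
          = θ * deriv (deriv (fun x' => u t x' - ∫ y in (0:ℝ)..x', K x' y * u t y)) x
            - c * (u t x - ∫ y in (0:ℝ)..x, K x y * u t y)) ∧
      (u t 0 - ∫ y in (0:ℝ)..(0:ℝ), K 0 y * u t y) = 0 ∧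
      (u t 1 - ∫ y in (0:ℝ)..1, K 1 y * u t y)
        = u t 1 - ∫ y in (0:ℝ)..1, K 1 y * u t y := by
  intro t ht
  have hKT : ContDiffOn ℝ 2 (fun p : ℝ × ℝ => K p.1 p.2) Tri := hKreg
  set F : ℝ × ℝ → ℝ := fun p => K p.1 p.2 with hFdef
  set F1 : ℝ × ℝ → ℝ := fun p => (fderivWithin ℝ F Tri p) ((1:ℝ), (0:ℝ)) with hF1def
  set F2 : ℝ × ℝ → ℝ := fun p => (fderivWithin ℝ F Tri p) ((0:ℝ), (1:ℝ)) with hF2def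
  have hDFreg : ContDiffOn ℝ 1 (fun p => fderivWithin ℝ F Tri p) Tri :=
    hKT.fderivWithin uniqueDiffOn_Tri (by norm_num)
  have hF1reg : ContDiffOn ℝ 1 F1 Tri := hDFreg.clm_apply contDiffOn_const
  have hF2reg : ContDiffOn ℝ 1 F2 Tri := hDFreg.clm_apply contDiffOn_const
  -- the solution at time t
  set v : ℝ → ℝ := u t with hvdef
  set dv : ℝ → ℝ := derivWithin v (Icc 0 1) with hdvdef
  set ddv : ℝ → ℝ := derivWithin dv (Icc 0 1) with hddvdef
  have hvC2 : ContDiffOn ℝ 2 v (Icc 0 1) := hC2 t ht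
  have cv : ContinuousOn v (Icc 0 1) := hvC2.continuousOn
  have hdvC1 : ContDiffOn ℝ 1 dv (Icc 0 1) :=
    hvC2.derivWithin (uniqueDiffOn_Icc zero_lt_one) (by norm_num)
  have cdv : ContinuousOn dv (Icc 0 1) := hdvC1.continuousOn
  have cddv : ContinuousOn ddv (Icc 0 1) := by
    have := hdvC1.derivWithin (uniqueDiffOn_Icc zero_lt_one) (m := 0) (by norm_num)
    exact this.continuousOn
  have hv' : ∀ y ∈ Ioo (0:ℝ) 1, HasDerivAt v (dv y) y := by
    intro y hy
    have h := (hvC2.differentiableOn (by norm_num)) y (Ioo_subset_Icc_self hy)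
    exact h.hasDerivWithinAt.hasDerivAt (Icc_mem_nhds hy.1 hy.2)
  have hdv' : ∀ y ∈ Ioo (0:ℝ) 1, HasDerivAt dv (ddv y) y := by
    intro y hy
    have h := (hdvC1.differentiableOn (by norm_num)) y (Ioo_subset_Icc_self hy)
    exact h.hasDerivWithinAt.hasDerivAt (Icc_mem_nhds hy.1 hy.2)
  have hdd_eq : ∀ y ∈ Ioo (0:ℝ) 1, deriv (deriv v) y = ddv y := by
    intro y hy
    have h1 : deriv v =ᶠ[nhds y] dv := by
      filter_upwards [isOpen_Ioo.mem_nhds hy] with z hz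
      exact (hv' z hz).deriv
    rw [h1.deriv_eq]
    exact (hdv' y hy).deriv
  have hv0 : v 0 = 0 := hbc t ht
  refine ⟨?_, by simp [hv0], rfl⟩
  intro x hx
  obtain ⟨hx0, hx1⟩ := hx
  set μ : ℝ := (lam + c) / (2*θ) with hμdef
  -- spatial derivative of the transform
  set Φ : ℝ → ℝ := fun z => ∫ y in (0:ℝ)..z, F1 (z, y) * v y with hΦdef
  have hW' : ∀ z ∈ Ioo (0:ℝ) 1, HasDerivAt (fun z' => ∫ y in (0:ℝ)..z', K z' y * v y)
      (F (z, z) * v z + Φ z) z := by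
    intro z hz
    exact sub_lemma F (hKT.of_le (by norm_num)) v dv cv hv' cdv hz
  have hΦ' : HasDerivAt Φ
      (F1 (x, x) * v x
        + ∫ y in (0:ℝ)..x, (fderivWithin ℝ F1 Tri (x, y)) ((1:ℝ),(0:ℝ)) * v y) x :=
    sub_lemma F1 hF1reg v dv cv hv' cdv ⟨hx0, hx1⟩
  have hg' : ∀ z ∈ Ioo (0:ℝ) 1,
      HasDerivAt (fun x' => v x' - ∫ y in (0:ℝ)..x', K x' y * v y)
        (dv z - (F (z, z) * v z + Φ z)) z := by
    intro z hz
    exact (hv' z hz).sub (hW' z hz)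
  have hg1 : ∀ z ∈ Ioo (0:ℝ) 1,
      deriv (fun x' => v x' - ∫ y in (0:ℝ)..x', K x' y * v y) z
        = dv z + μ * z * v z - Φ z := by
    intro z hz
    rw [(hg' z hz).deriv]
    have hFd : F (z, z) = -μ * z := by
      have := hKdiag z (Ioo_subset_Icc_self hz)
      simpa [hμdef] using this
    rw [hFd]; ring
  have hwxx : deriv (deriv (fun x' => v x' - ∫ y in (0:ℝ)..x', K x' y * v y)) x
      = ddv x + (μ * v x + μ * x * dv x)
        - (F1 (x, x) * v x
          + ∫ y in (0:ℝ)..x, (fderivWithin ℝ F1 Tri (x, y)) ((1:ℝ),(0:ℝ)) * v y) := by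
    have heq : deriv (fun x' => v x' - ∫ y in (0:ℝ)..x', K x' y * v y)
        =ᶠ[nhds x] fun z => dv z + μ * z * v z - Φ z := by
      filter_upwards [isOpen_Ioo.mem_nhds (⟨hx0, hx1⟩ : x ∈ Ioo (0:ℝ) 1)] with z hz
      exact hg1 z hz
    rw [heq.deriv_eq]
    have hmul : HasDerivAt (fun z => μ * z * v z) (μ * v x + μ * x * dv x) x := by
      have h1 : HasDerivAt (fun z : ℝ => μ * z) μ x := by
        simpa using (hasDerivAt_id x).const_mul μ
      exact h1.mul (hv' x ⟨hx0, hx1⟩)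
    exact (((hdv' x ⟨hx0, hx1⟩).add hmul).sub hΦ').deriv
  -- time derivative of the transform
  set P : Set (ℝ × ℝ) := Ioo a b ×ˢ Icc (0:ℝ) 1 with hPdef
  have hUreg : ContDiffOn ℝ 1 (fun p : ℝ × ℝ => u p.1 p.2) P := hreg
  have hUP : UniqueDiffOn ℝ P := (isOpen_Ioo.uniqueDiffOn).prod (uniqueDiffOn_Icc zero_lt_one)
  set D1 : ℝ × ℝ → ℝ :=
    fun p => (fderivWithin ℝ (fun p : ℝ × ℝ => u p.1 p.2) P p) ((1:ℝ),(0:ℝ)) with hD1def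
  have D1C : ContinuousOn D1 P :=
    (hUreg.continuousOn_fderivWithin hUP le_rfl).clm_apply continuousOn_const
  have hDarg : ∀ s ∈ Ioo a b, ∀ y ∈ Icc (0:ℝ) 1,
      HasDerivAt (fun s' => u s' y) (D1 (s, y)) s := by
    intro s hs y hy
    refine hasDerivAt_comp_path (T := P) (γ := fun s' => (s', y))
      ((hUreg.differentiableOn (by norm_num)) _ (Set.mem_prod.2 ⟨hs, hy⟩))
      ((hasDerivAt_id s).prodMk (hasDerivAt_const s y)) ?_
    filter_upwards [isOpen_Ioo.mem_nhds hs] with w hw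
    exact Set.mem_prod.2 ⟨hw, hy⟩
  obtain ⟨ε, hε, hball⟩ : ∃ ε > 0, Metric.closedBall t ε ⊆ Ioo a b :=
    Metric.nhds_basis_closedBall.mem_iff.1 (isOpen_Ioo.mem_nhds ht)
  have hballo : Metric.ball t ε ⊆ Ioo a b := Metric.ball_subset_closedBall.trans hball
  set C : Set (ℝ × ℝ) := Icc (t-ε) (t+ε) ×ˢ Icc (0:ℝ) 1 with hCdef
  have hCsub : C ⊆ P := by
    rintro p ⟨hp1, hp2⟩
    rw [← Real.closedBall_eq_Icc] at hp1
    exact Set.mem_prod.2 ⟨hball hp1, hp2⟩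
  obtain ⟨MB, hMB⟩ :=
    ((isCompact_Icc).prod isCompact_Icc).exists_bound_of_continuousOn (D1C.mono hCsub)
  obtain ⟨MK, hMK⟩ := isCompact_Tri.exists_bound_of_continuousOn hKT.continuousOn
  have hMB0 : 0 ≤ MB := le_trans (norm_nonneg _)
    (hMB (t, 0) (Set.mem_prod.2 ⟨⟨by linarith, by linarith⟩, by norm_num⟩))
  have hMK0 : 0 ≤ MK := le_trans (norm_nonneg _) (hMK (1,0) ⟨le_refl 0, by norm_num, le_refl 1⟩)
  have hmemT2 : ∀ y ∈ Icc (0:ℝ) x, ((x, y) : ℝ × ℝ) ∈ Tri := fun y hy => ⟨hy.1, hy.2, hx1.le⟩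
  have cKx : ContinuousOn (fun y => K x y) (Icc 0 x) :=
    hKT.continuousOn.comp ((continuous_const.prodMk continuous_id).continuousOn)
      (fun y hy => hmemT2 y hy)
  have huIccx : uIcc (0:ℝ) x = Icc 0 x := uIcc_of_le hx0.le
  have hsubx2 : Ι (0:ℝ) x ⊆ Icc (0:ℝ) x := by rw [uIoc_of_le hx0.le]; exact Ioc_subset_Icc_self
  have hsubx : Ι (0:ℝ) x ⊆ Icc (0:ℝ) 1 :=
    hsubx2.trans (Icc_subset_Icc le_rfl hx1.le)
  have cvx : ContinuousOn v (Icc 0 x) := cv.mono (Icc_subset_Icc le_rfl hx1.le)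
  have cddvx : ContinuousOn ddv (Icc 0 x) := cddv.mono (Icc_subset_Icc le_rfl hx1.le)
  have meas1t : ∀ᶠ s in nhds t,
      AEStronglyMeasurable (fun y => K x y * u s y) (volume.restrict (Ι (0:ℝ) x)) := by
    filter_upwards [isOpen_Ioo.mem_nhds ht] with s hs
    exact ((cKx.mul (((hC2 s hs).continuousOn).mono
      (Icc_subset_Icc le_rfl hx1.le))).mono hsubx2).aestronglyMeasurable measurableSet_uIoc
  have int1t : IntervalIntegrable (fun y => K x y * v y) volume 0 x :=
    ContinuousOn.intervalIntegrable (by rw [huIccx]; exact cKx.mul cvx)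
  have cD1x : ContinuousOn (fun y => D1 (t, y)) (Icc 0 1) :=
    D1C.comp ((continuous_const.prodMk continuous_id).continuousOn)
      (fun y hy => Set.mem_prod.2 ⟨ht, hy⟩)
  have meas2t : AEStronglyMeasurable (fun y => K x y * D1 (t, y)) (volume.restrict (Ι (0:ℝ) x)) :=
    ((cKx.mul (cD1x.mono (Icc_subset_Icc le_rfl hx1.le))).mono hsubx2).aestronglyMeasurable
      measurableSet_uIoc
  have bound_t : ∀ᵐ y ∂(volume : Measure ℝ), y ∈ Ι (0:ℝ) x → ∀ s ∈ ball t ε,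
      ‖K x y * D1 (s, y)‖ ≤ MK * MB := by
    refine Filter.Eventually.of_forall (fun y hy s hs => ?_)
    have hyx : y ∈ Icc (0:ℝ) x := hsubx2 hy
    have hsC : ((s, y) : ℝ × ℝ) ∈ Icc (t-ε) (t+ε) ×ˢ Icc (0:ℝ) 1 := by
      refine Set.mem_prod.2 ⟨?_, hsubx hy⟩
      rw [← Real.closedBall_eq_Icc]
      exact Metric.ball_subset_closedBall hs
    rw [norm_mul]
    exact mul_le_mul (hMK _ (hmemT2 y hyx)) (hMB _ hsC) (norm_nonneg _) hMK0
  have diff_t : ∀ᵐ y ∂(volume : Measure ℝ), y ∈ Ι (0:ℝ) x → ∀ s ∈ ball t ε,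
      HasDerivAt (fun s' => K x y * u s' y) (K x y * D1 (s, y)) s := by
    refine Filter.Eventually.of_forall (fun y hy s hs => ?_)
    exact (hDarg s (hballo hs) y (hsubx hy)).const_mul (K x y)
  obtain ⟨_, hTd⟩ := intervalIntegral.hasDerivAt_integral_of_dominated_loc_of_deriv_le
    (F := fun s y => K x y * u s y) (F' := fun s y => K x y * D1 (s, y)) (x₀ := t)
    (a := 0) (b := x) (μ := volume) (bound := fun _ => MK * MB) (Metric.ball_mem_nhds _ hε)
    meas1t (by exact int1t) meas2t bound_t intervalIntegrable_const diff_t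
  have hTfull : HasDerivAt (fun s => u s x - ∫ y in (0:ℝ)..x, K x y * u s y)
      (D1 (t, x) - ∫ y in (0:ℝ)..x, K x y * D1 (t, y)) t :=
    (hDarg t ht x ⟨hx0.le, hx1.le⟩).sub hTd
  -- identify D1 with the PDE right-hand side
  have hD1pde : ∀ y ∈ Ioo (0:ℝ) 1, D1 (t, y) = θ * ddv y + lam * v y := by
    intro y hy
    have h1 : deriv (fun s => u s y) t = D1 (t, y) :=
      (hDarg t ht y (Ioo_subset_Icc_self hy)).deriv
    rw [← h1, hpde t ht y hy, hdd_eq y hy]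
  have intKdd : IntervalIntegrable (fun y => K x y * ddv y) volume 0 x :=
    ContinuousOn.intervalIntegrable (by rw [huIccx]; exact cKx.mul cddvx)
  have hTint : (∫ y in (0:ℝ)..x, K x y * D1 (t, y))
      = θ * (∫ y in (0:ℝ)..x, K x y * ddv y) + lam * (∫ y in (0:ℝ)..x, K x y * v y) := by
    have hcong : ∀ᵐ y ∂(volume : Measure ℝ), y ∈ Ι (0:ℝ) x →
        K x y * D1 (t, y) = θ * (K x y * ddv y) + lam * (K x y * v y) := by
      refine Filter.Eventually.of_forall (fun y hy => ?_)
      have hyI : y ∈ Ioo (0:ℝ) 1 := by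
        rw [uIoc_of_le hx0.le] at hy
        exact ⟨hy.1, lt_of_le_of_lt hy.2 hx1⟩
      rw [hD1pde y hyI]; ring
    rw [intervalIntegral.integral_congr_ae hcong,
      intervalIntegral.integral_add (intKdd.const_mul θ) (int1t.const_mul lam),
      intervalIntegral.integral_const_mul, intervalIntegral.integral_const_mul]
  -- integration by parts
  have cF2x : ContinuousOn (fun y => F2 (x, y)) (Icc 0 x) :=
    hF2reg.continuousOn.comp ((continuous_const.prodMk continuous_id).continuousOn)
      (fun y hy => hmemT2 y hy)
  have cF22x : ContinuousOn (fun y => (fderivWithin ℝ F2 Tri (x, y)) ((0:ℝ),(1:ℝ))) (Icc 0 x) :=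
    ((hF2reg.continuousOn_fderivWithin uniqueDiffOn_Tri le_rfl).comp
      ((continuous_const.prodMk continuous_id).continuousOn)
      (fun y hy => hmemT2 y hy)).clm_apply continuousOn_const
  have cF11x : ContinuousOn (fun y => (fderivWithin ℝ F1 Tri (x, y)) ((1:ℝ),(0:ℝ))) (Icc 0 x) :=
    ((hF1reg.continuousOn_fderivWithin uniqueDiffOn_Tri le_rfl).comp
      ((continuous_const.prodMk continuous_id).continuousOn)
      (fun y hy => hmemT2 y hy)).clm_apply continuousOn_const
  have cdvx : ContinuousOn dv (Icc 0 x) := cdv.mono (Icc_subset_Icc le_rfl hx1.le)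
  have intF22v : IntervalIntegrable
      (fun y => (fderivWithin ℝ F2 Tri (x, y)) ((0:ℝ),(1:ℝ)) * v y) volume 0 x :=
    ContinuousOn.intervalIntegrable (by rw [huIccx]; exact cF22x.mul cvx)
  have intF11v : IntervalIntegrable
      (fun y => (fderivWithin ℝ F1 Tri (x, y)) ((1:ℝ),(0:ℝ)) * v y) volume 0 x :=
    ContinuousOn.intervalIntegrable (by rw [huIccx]; exact cF11x.mul cvx)
  have hIBP : (∫ y in (0:ℝ)..x, K x y * ddv y)
      = (∫ y in (0:ℝ)..x, (fderivWithin ℝ F2 Tri (x, y)) ((0:ℝ),(1:ℝ)) * v y)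
        + (-μ * x) * dv x - F2 (x, x) * v x := by
    have hQcont : ContinuousOn (fun y => K x y * dv y - F2 (x, y) * v y) (Icc 0 x) :=
      (cKx.mul cdvx).sub (cF2x.mul cvx)
    have hQderiv : ∀ y ∈ Ioo (0:ℝ) x,
        HasDerivWithinAt (fun y' => K x y' * dv y' - F2 (x, y') * v y')
          (K x y * ddv y - (fderivWithin ℝ F2 Tri (x, y)) ((0:ℝ),(1:ℝ)) * v y) (Ioi y) y := by
      intro y hy
      have hyI : y ∈ Ioo (0:ℝ) 1 := ⟨hy.1, lt_trans hy.2 hx1⟩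
      have hmem : ∀ᶠ w in nhds y, ((x, w) : ℝ × ℝ) ∈ Tri := by
        filter_upwards [isOpen_Ioo.mem_nhds hy] with w hw
        exact hmemT2 w (Ioo_subset_Icc_self hw)
      have hK_y : HasDerivAt (fun y' => K x y') (F2 (x, y)) y :=
        hasDerivAt_comp_path (T := Tri) (γ := fun y' => (x, y'))
          ((hKT.differentiableOn (by norm_num)) _ (hmemT2 y (Ioo_subset_Icc_self hy)))
          ((hasDerivAt_const y x).prodMk (hasDerivAt_id y)) hmem
      have hF2_y : HasDerivAt (fun y' => F2 (x, y'))
          ((fderivWithin ℝ F2 Tri (x, y)) ((0:ℝ),(1:ℝ))) y :=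
        hasDerivAt_comp_path (T := Tri) (γ := fun y' => (x, y'))
          ((hF2reg.differentiableOn (by norm_num)) _ (hmemT2 y (Ioo_subset_Icc_self hy)))
          ((hasDerivAt_const y x).prodMk (hasDerivAt_id y)) hmem
      have h := (hK_y.mul (hdv' y hyI)).sub (hF2_y.mul (hv' y hyI))
      have heq : F2 (x, y) * dv y + K x y * ddv y
          - ((fderivWithin ℝ F2 Tri (x, y)) ((0:ℝ),(1:ℝ)) * v y + F2 (x, y) * dv y)
          = K x y * ddv y - (fderivWithin ℝ F2 Tri (x, y)) ((0:ℝ),(1:ℝ)) * v y := by ring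
      rw [heq] at h
      exact h.hasDerivWithinAt
    have hQint : IntervalIntegrable
        (fun y => K x y * ddv y - (fderivWithin ℝ F2 Tri (x, y)) ((0:ℝ),(1:ℝ)) * v y)
        volume 0 x := intKdd.sub intF22v
    have hftc := intervalIntegral.integral_eq_sub_of_hasDeriv_right_of_le
      hx0.le hQcont hQderiv hQint
    rw [intervalIntegral.integral_sub intKdd intF22v] at hftc
    have hKx0 : K x 0 = 0 := hK0 x ⟨hx0.le, hx1.le⟩
    have hKxx : K x x = -μ * x := hKdiag x ⟨hx0.le, hx1.le⟩
    linear_combination hftc + dv x * hKxx - dv 0 * hKx0 + F2 (x, 0) * hv0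
  -- kernel PDE transfer to the interior
  have hPDEpt : ∀ y : ℝ, 0 < y → y < x →
      θ * ((fderivWithin ℝ F1 Tri (x, y)) ((1:ℝ),(0:ℝ))
        - (fderivWithin ℝ F2 Tri (x, y)) ((0:ℝ),(1:ℝ))) = (lam + c) * K x y := by
    intro y hy0 hyx
    have hint : Tri ∈ nhds ((x, y) : ℝ × ℝ) := interior_Tri_mem hy0 hyx hx1
    have hxT : ((x, y) : ℝ × ℝ) ∈ Tri := ⟨hy0.le, hyx.le, hx1.le⟩
    have idA : deriv (deriv (fun x' => K x' y)) x
        = (fderivWithin ℝ F1 Tri (x, y)) ((1:ℝ),(0:ℝ)) := by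
      have hevt : deriv (fun x' => K x' y) =ᶠ[nhds x] fun z => F1 (z, y) := by
        filter_upwards [isOpen_Ioo.mem_nhds (⟨hyx, hx1⟩ : x ∈ Ioo y 1)] with z hz
        have hzT : ((z, y) : ℝ × ℝ) ∈ Tri := ⟨hy0.le, hz.1.le, hz.2.le⟩
        have hintz : Tri ∈ nhds ((z, y) : ℝ × ℝ) := interior_Tri_mem hy0 hz.1 hz.2
        have hdiff : DifferentiableAt ℝ F (z, y) :=
          ((hKT _ hzT).contDiffAt hintz).differentiableAt (by norm_num)
        have hd : HasDerivAt (fun x' => K x' y) (fderiv ℝ F (z, y) ((1:ℝ),(0:ℝ))) z :=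
          by have := hdiff.hasFDerivAt.comp_hasDerivAt z ((hasDerivAt_id z).prodMk (hasDerivAt_const z y)); exact this
        rw [hd.deriv]
        have h1 : F1 (z, y) = (fderivWithin ℝ F Tri (z, y)) ((1:ℝ),(0:ℝ)) := rfl
        rw [h1, fderivWithin_of_mem_nhds hintz]
      rw [hevt.deriv_eq]
      have hdiff1 : DifferentiableAt ℝ F1 (x, y) :=
        ((hF1reg _ hxT).contDiffAt hint).differentiableAt (by norm_num)
      have hd1 : HasDerivAt (fun z => F1 (z, y)) (fderiv ℝ F1 (x, y) ((1:ℝ),(0:ℝ))) x :=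
        by have := hdiff1.hasFDerivAt.comp_hasDerivAt x ((hasDerivAt_id x).prodMk (hasDerivAt_const x y)); exact this
      rw [hd1.deriv, fderivWithin_of_mem_nhds hint]
    have idB : deriv (deriv (fun y' => K x y')) y
        = (fderivWithin ℝ F2 Tri (x, y)) ((0:ℝ),(1:ℝ)) := by
      have hevt : deriv (fun y' => K x y') =ᶠ[nhds y] fun z => F2 (x, z) := by
        filter_upwards [isOpen_Ioo.mem_nhds (⟨hy0, hyx⟩ : y ∈ Ioo 0 x)] with z hz
        have hzT : ((x, z) : ℝ × ℝ) ∈ Tri := ⟨hz.1.le, hz.2.le, hx1.le⟩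
        have hintz : Tri ∈ nhds ((x, z) : ℝ × ℝ) := interior_Tri_mem hz.1 hz.2 hx1
        have hdiff : DifferentiableAt ℝ F (x, z) :=
          ((hKT _ hzT).contDiffAt hintz).differentiableAt (by norm_num)
        have hd : HasDerivAt (fun y' => K x y') (fderiv ℝ F (x, z) ((0:ℝ),(1:ℝ))) z :=
          hdiff.hasFDerivAt.comp_hasDerivAt z ((hasDerivAt_const z x).prodMk (hasDerivAt_id z))
        rw [hd.deriv]
        have h1 : F2 (x, z) = (fderivWithin ℝ F Tri (x, z)) ((0:ℝ),(1:ℝ)) := rfl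
        rw [h1, fderivWithin_of_mem_nhds hintz]
      rw [hevt.deriv_eq]
      have hdiff2 : DifferentiableAt ℝ F2 (x, y) :=
        ((hF2reg _ hxT).contDiffAt hint).differentiableAt (by norm_num)
      have hd2 : HasDerivAt (fun z => F2 (x, z)) (fderiv ℝ F2 (x, y) ((0:ℝ),(1:ℝ))) y :=
        hdiff2.hasFDerivAt.comp_hasDerivAt y ((hasDerivAt_const y x).prodMk (hasDerivAt_id y))
      rw [hd2.deriv, fderivWithin_of_mem_nhds hint]
    have h := hKpde x y hy0.le hyx.le hx1.le
    rw [idA, idB] at h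
    exact h
  have hPDEint : θ * (∫ y in (0:ℝ)..x, (fderivWithin ℝ F1 Tri (x, y)) ((1:ℝ),(0:ℝ)) * v y)
      - θ * (∫ y in (0:ℝ)..x, (fderivWithin ℝ F2 Tri (x, y)) ((0:ℝ),(1:ℝ)) * v y)
      = (lam + c) * (∫ y in (0:ℝ)..x, K x y * v y) := by
    rw [← intervalIntegral.integral_const_mul, ← intervalIntegral.integral_const_mul,
      ← intervalIntegral.integral_sub (intF11v.const_mul θ) (intF22v.const_mul θ),
      ← intervalIntegral.integral_const_mul]
    refine intervalIntegral.integral_congr_ae ?_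
    have hae : ∀ᵐ y ∂(volume : Measure ℝ), y ≠ x := by
      rw [MeasureTheory.ae_iff]
      simp only [not_not, setOf_eq_eq_singleton]
      exact measure_singleton x
    filter_upwards [hae] with y hyne hyI
    rw [uIoc_of_le hx0.le] at hyI
    have hyx : y < x := lt_of_le_of_ne hyI.2 hyne
    have h := hPDEpt y hyI.1 hyx
    linear_combination v y * h
  -- diagonal identity
  have hDiag : F1 (x, x) + F2 (x, x) = -μ := by
    have hxxT : ((x, x) : ℝ × ℝ) ∈ Tri := ⟨hx0.le, le_rfl, hx1.le⟩
    have hd1 : HasDerivAt (fun z => F (z, z)) (fderivWithin ℝ F Tri (x, x) ((1:ℝ),(1:ℝ))) x := by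
      refine hasDerivAt_comp_path (T := Tri) (γ := fun z => (z, z))
        ((hKT.differentiableOn (by norm_num)) _ hxxT)
        ((hasDerivAt_id x).prodMk (hasDerivAt_id x)) ?_
      filter_upwards [isOpen_Ioo.mem_nhds (⟨hx0, hx1⟩ : x ∈ Ioo (0:ℝ) 1)] with w hw
      exact ⟨hw.1.le, le_rfl, hw.2.le⟩
    have hd2 : HasDerivAt (fun z => F (z, z)) (-μ) x := by
      have hlin : HasDerivAt (fun z : ℝ => -μ * z) (-μ) x := by
        simpa using (hasDerivAt_id x).const_mul (-μ)
      refine hlin.congr_of_eventuallyEq ?_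
      filter_upwards [isOpen_Ioo.mem_nhds (⟨hx0, hx1⟩ : x ∈ Ioo (0:ℝ) 1)] with w hw
      exact hKdiag w (Ioo_subset_Icc_self hw)
    have huniq := hd1.unique hd2
    have hsplit : ((1:ℝ),(1:ℝ)) = ((1:ℝ),(0:ℝ)) + ((0:ℝ),(1:ℝ)) := by norm_num
    rw [hsplit, ContinuousLinearMap.map_add] at huniq
    exact huniq
  -- final assembly
  have hμfact : θ * μ * 2 = lam + c := by
    rw [hμdef]; field_simp
  rw [hTfull.deriv, hwxx, hTint, hD1pde x ⟨hx0, hx1⟩, hIBP]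
  linear_combination hPDEint + (θ * v x) * hDiag - (v x) * hμfact
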